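/- For a nonnegative integer n and parameters a, b, c, d with (d)_n ≠ 0 and all intermediate Pochhammer denominators nonzero: Σ_{i=0}^{n} (-n)_i (a)_i (b)_i / (i! (c)_i (d)_i) = [(c + d - a - b)_n / (d)_n] · Σ_{i=0}^{n} (-n)_i (c-a)_i (c-b)_i / (i! (c)_i (c - a - b + d)_i). -/

import Mathlib

noncomputable def poch (x : ℝ) (n : ℕ) : ℝ := ∏ i ∈ Finset.range n, (x + i)


@[simp] lemma poch_zero (x : ℝ) : poch x 0 = 1 := by simp [poch]

lemma poch_succ (x : ℝ) (n : ℕ) : poch x (n + 1) = poch x n * (x + n) := by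
  simp [poch, Finset.prod_range_succ]

lemma poch_add (x : ℝ) (m k : ℕ) : poch x (m + k) = poch x m * poch (x + m) k := by
  induction k with
  | zero => simp
  | succ k ih =>
      rw [← Nat.add_assoc, poch_succ, poch_succ, ih]
      push_cast
      ring

lemma poch_one (x : ℝ) : poch x 1 = x := by simp [poch]

lemma poch_neg_nat {n i : ℕ} (h : i ≤ n) :
    poch (-(n : ℝ)) i = (-1) ^ i * (Nat.descFactorial n i : ℝ) := by
  induction i with
  | zero => simp
  | succ i ih =>
      rw [poch_succ, ih (Nat.le_of_succ_le h), Nat.descFactorial_succ]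
      have h2 : (i : ℝ) ≤ n := by exact_mod_cast Nat.le_of_succ_le h
      have : ((n - i : ℕ) : ℝ) = (n : ℝ) - i := by
        have := Nat.le_of_succ_le h
        push_cast [this]; ring
      push_cast [this]
      ring

lemma poch_succ' (x : ℝ) (n : ℕ) : poch x (n + 1) = x * poch (x + 1) n := by
  have h := poch_add x 1 n
  rw [Nat.add_comm 1 n] at h
  simpa [poch_one] using h


lemma vand : ∀ (m : ℕ) (x y : ℝ),
    (∑ k ∈ Finset.range (m+1),
      (-1:ℝ)^k * (m.choose k : ℝ) * poch x k * poch (x + y + k) (m - k)) = poch y m := by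
  intro m
  induction m with
  | zero => intro x y; simp
  | succ m ih =>
    intro x y
    rw [Finset.sum_range_succ' _ (m+1)]
    push_cast
    have split : ∀ k ∈ Finset.range (m+1),
        (-1:ℝ)^(k+1) * ((m+1).choose (k+1) : ℝ) * poch x (k+1) * poch (x + y + ((k:ℝ)+1)) (m - k)
        = (-1:ℝ)^(k+1) * (m.choose (k+1) : ℝ) * poch x (k+1) * poch (x + y + ((k:ℝ)+1)) (m - k)
          + (-1:ℝ)^(k+1) * (m.choose k : ℝ) * poch x (k+1) * poch (x + y + ((k:ℝ)+1)) (m - k) := by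
      intro k hk
      have h2 : ((m+1).choose (k+1) : ℝ) = (m.choose k : ℝ) + (m.choose (k+1) : ℝ) := by
        rw [Nat.choose_succ_succ]; push_cast; ring
      rw [h2]; ring
    rw [Finset.sum_congr rfl split, Finset.sum_add_distrib]
    have reassemble :
        ((∑ k ∈ Finset.range (m+1),
          (-1:ℝ)^(k+1) * (m.choose (k+1) : ℝ) * poch x (k+1) * poch (x + y + ((k:ℝ)+1)) (m - k))
        + poch (x + y) (m + 1))
        = ∑ k ∈ Finset.range (m+2),
            (-1:ℝ)^k * (m.choose k : ℝ) * poch x k * poch (x + y + k) (m + 1 - k) := by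
      rw [Finset.sum_range_succ' (fun k => (-1:ℝ)^k * (m.choose k : ℝ) * poch x k * poch (x + y + k) (m + 1 - k)) (m+1)]
      push_cast
      congr 1
      simp
    rw [add_assoc, add_comm (∑ k ∈ Finset.range (m+1), (-1:ℝ)^(k+1) * (m.choose k : ℝ) * poch x (k+1) * poch (x + y + ((k:ℝ)+1)) (m - k))]
    have e0 : ((-1:ℝ)) ^ 0 * (((m+1).choose 0 : ℕ) : ℝ) * poch x 0 * poch (x + y + 0) (m + 1) = poch (x+y) (m+1) := by
      simp
    rw [e0, ← add_assoc, reassemble, Finset.sum_range_succ]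
    simp only [Nat.choose_succ_self, Nat.cast_zero]
    rw [mul_zero, zero_mul, zero_mul, add_zero, ← Finset.sum_add_distrib]
    have combine : ∀ k ∈ Finset.range (m+1),
        ((-1:ℝ)^k * (m.choose k : ℝ) * poch x k * poch (x + y + k) (m + 1 - k)
          + (-1:ℝ)^(k+1) * (m.choose k : ℝ) * poch x (k+1) * poch (x + y + ((k:ℝ)+1)) (m - k))
        = y * ((-1:ℝ)^k * (m.choose k : ℝ) * poch x k * poch (x + (y+1) + k) (m - k)) := by
      intro k hk
      have hk2 : k ≤ m := Nat.lt_succ_iff.mp (Finset.mem_range.mp hk)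
      have h1 : m + 1 - k = (m - k) + 1 := by omega
      rw [h1, poch_succ' (x + y + k) (m - k), poch_succ x k]
      have h2 : x + y + (k:ℝ) + 1 = x + (y+1) + k := by ring
      rw [h2]
      have h3 : x + y + ((k:ℝ)+1) = x + (y+1) + k := by ring
      rw [h3]
      ring
    rw [Finset.sum_congr rfl combine, ← Finset.mul_sum, ih x (y+1), poch_succ']

lemma saal : ∀ (i : ℕ) (a b c : ℝ),
    (∑ j ∈ Finset.range (i+1),
      (Nat.choose i j : ℝ) * poch a j * poch b j * poch (c+j) (i-j) * poch (c-a-b) (i-j))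
    = poch (c-a) i * poch (c-b) i := by
  intro i
  induction i with
  | zero => intro a b c; simp
  | succ i ih =>
    intro a b c
    set W : ℕ → ℝ := fun j => (j:ℝ) * (Nat.choose (i+1) j : ℝ) * poch a j * poch b j *
        poch (c+(j:ℝ)-1) (i+1-j) * poch (c-a-b) (i+1-j) with hW
    have key : ∀ j ∈ Finset.range (i+2),
        ((i:ℝ)+1) * ((Nat.choose (i+1) j : ℝ) * poch a j * poch b j * poch (c+j) (i+1-j) * poch (c-a-b) (i+1-j))
        - ((i:ℝ)+1) * ((c-a+i)*(c-b+i) * ((Nat.choose i j : ℝ) * poch a j * poch b j * poch (c+j) (i-j) * poch (c-a-b) (i-j)))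
        = W j - W (j+1) := by
      intro j hj
      have hj2 : j ≤ i + 1 := Nat.lt_succ_iff.mp (Finset.mem_range.mp hj)
      rcases Nat.lt_or_ge j (i+1) with hcase | hcase
      · obtain ⟨m, hm⟩ : ∃ m, i = j + m := ⟨i - j, by omega⟩
        subst hm
        simp only [hW]
        have e1 : j + m + 1 - j = m + 1 := by omega
        have e2 : j + m - j = m := by omega
        have e3 : j + m + 1 - (j + 1) = m := by omega
        rw [e1, e2, e3]
        rw [poch_succ (c+(j:ℝ)) m, poch_succ (c-a-b) m, poch_succ' (c+(j:ℝ)-1) m]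
        have a1 : c + (j:ℝ) - 1 + 1 = c + (j:ℝ) := by ring
        rw [a1]
        have a2 : c + ((j:ℕ)+1 : ℕ) - 1 = c + (j:ℝ) := by push_cast; ring
        rw [a2]
        rw [poch_succ a j, poch_succ b j]
        -- choose identities
        have h1 : ((m:ℝ)+1) * (Nat.choose (j+m+1) j : ℝ) = ((j:ℝ)+(m:ℝ)+1) * (Nat.choose (j+m) j : ℝ) := by
          have hs1 : (j+m+1).choose (j+m+1-j) = (j+m+1).choose j := Nat.choose_symm (by omega)
          have hs2 : (j+m).choose (j+m-j) = (j+m).choose j := Nat.choose_symm (by omega)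
          rw [show j+m+1-j = m+1 from by omega] at hs1
          rw [show j+m-j = m from by omega] at hs2
          have hnat := Nat.add_one_mul_choose_eq (j+m) m
          rw [hs2] at hnat
          rw [hs1] at hnat
          have := congrArg (fun t : ℕ => (t : ℝ)) hnat
          push_cast at this
          linarith [this]
        have h2 : ((j:ℝ)+1) * (Nat.choose (j+m+1) (j+1) : ℝ) = ((j:ℝ)+(m:ℝ)+1) * (Nat.choose (j+m) j : ℝ) := by
          have hnat := Nat.add_one_mul_choose_eq (j+m) j
          have : (j+m+1) * Nat.choose (j+m) j = Nat.choose (j+m+1) (j+1) * (j+1) := by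
            simpa [Nat.succ_eq_add_one] using hnat
          have := congrArg (fun t : ℕ => (t : ℝ)) this
          push_cast at this
          linarith [this]
        push_cast
        push_cast at h1 h2
        linear_combination (poch a j * poch b j * poch (c+(j:ℝ)) m * poch (c-a-b) m *
            ((c-a+((j:ℝ)+(m:ℝ)))*(c-b+((j:ℝ)+(m:ℝ))) - (a+(j:ℝ))*(b+(j:ℝ)))) * h1
          + (poch a j * poch b j * poch (c+(j:ℝ)) m * poch (c-a-b) m * (a+(j:ℝ))*(b+(j:ℝ))) * h2
      · have hj3 : j = i+1 := by omega
        subst hj3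
        simp only [hW]
        have e1 : i + 1 - (i+1) = 0 := by omega
        have e2 : i - (i+1) = 0 := by omega
        have e3 : i + 1 - (i+1+1) = 0 := by omega
        rw [e1, e2, e3]
        rw [Nat.choose_succ_self, Nat.choose_self, Nat.choose_eq_zero_of_lt (by omega : i+1 < i+1+1)]
        simp only [poch_zero]
        push_cast
        ring
    have hW0 : W 0 = 0 := by simp [hW]
    have hWe : W (i+2) = 0 := by
      simp only [hW]
      rw [Nat.choose_eq_zero_of_lt (by omega)]
      simp
    have sum_eq := Finset.sum_congr rfl key
    rw [Finset.sum_range_sub' W] at sum_eq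
    rw [hW0, hWe, sub_zero, Finset.sum_sub_distrib, ← Finset.mul_sum, ← Finset.mul_sum] at sum_eq
    have hS0 : (∑ j ∈ Finset.range (i+2),
        ((c-a+(i:ℝ))*(c-b+(i:ℝ)) * ((Nat.choose i j : ℝ) * poch a j * poch b j * poch (c+(j:ℝ)) (i-j) * poch (c-a-b) (i-j))))
        = (c-a+(i:ℝ))*(c-b+(i:ℝ)) * (poch (c-a) i * poch (c-b) i) := by
      rw [← Finset.mul_sum]
      congr 1
      rw [Finset.sum_range_succ, Nat.choose_eq_zero_of_lt (by omega)]
      rw [← ih a b c]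
      simp
    rw [hS0] at sum_eq
    have hne : ((i:ℝ)+1) ≠ 0 := by positivity
    apply mul_left_cancel₀ hne
    rw [poch_succ (c-a) i, poch_succ (c-b) i]
    linear_combination sum_eq

-- inner summand of the double sum
noncomputable def dsum (n : ℕ) (a b c d : ℝ) : ℝ :=
  ∑ j ∈ Finset.range (n+1), ∑ k ∈ Finset.range (n+1-j),
    poch (-(n:ℝ)) j * poch a j * poch b j / ((Nat.factorial j : ℝ) * poch c j) *
      ((-1:ℝ)^k * (Nat.choose (n-j) k : ℝ) * poch (c-a-b) k *
        poch ((c-a-b) + (d+(j:ℝ)) + (k:ℝ)) (n-j-k))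

lemma dsumL (n : ℕ) (a b c d : ℝ) :
    (∑ i ∈ Finset.range (n+1),
      poch (-(n:ℝ)) i * poch a i * poch b i * poch (d+(i:ℝ)) (n-i) /
        ((Nat.factorial i : ℝ) * poch c i))
    = dsum n a b c d := by
  unfold dsum
  apply Finset.sum_congr rfl
  intro j hj
  have hj2 : j ≤ n := Nat.lt_succ_iff.mp (Finset.mem_range.mp hj)
  rw [← Finset.mul_sum]
  rw [show n + 1 - j = (n - j) + 1 from by omega]
  rw [vand (n-j) (c-a-b) (d+(j:ℝ))]
  ring

lemma term_eq (n j k : ℕ) (a b c d : ℝ) (hjk : j + k ≤ n)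
    (h1 : poch c j ≠ 0) (h2 : poch (c + (j:ℝ)) k ≠ 0) :
    poch (-(n:ℝ)) (j+k) * ((Nat.choose (j+k) j : ℝ) * poch a j * poch b j *
        poch (c+(j:ℝ)) (j+k-j) * poch (c-a-b) (j+k-j)) *
      poch (c-a-b+d+((j+k:ℕ):ℝ)) (n-(j+k)) / ((Nat.factorial (j+k) : ℝ) * poch c (j+k))
    = poch (-(n:ℝ)) j * poch a j * poch b j / ((Nat.factorial j : ℝ) * poch c j) *
      ((-1:ℝ)^k * (Nat.choose (n-j) k : ℝ) * poch (c-a-b) k *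
        poch ((c-a-b) + (d+(j:ℝ)) + (k:ℝ)) (n-j-k)) := by
  have hj : j ≤ n := by omega
  rw [show j + k - j = k from by omega]
  rw [show n - (j+k) = n - j - k from by omega]
  rw [show c-a-b+d+((j+k:ℕ):ℝ) = (c-a-b) + (d+(j:ℝ)) + (k:ℝ) from by push_cast; ring]
  rw [poch_add (-(n:ℝ)) j k, poch_add c j k]
  rw [show -(n:ℝ) + (j:ℝ) = -(((n-j:ℕ)):ℝ) from by rw [Nat.cast_sub hj]; ring]
  rw [poch_neg_nat (show k ≤ n - j from by omega)]
  rw [Nat.descFactorial_eq_factorial_mul_choose]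
  have hfact : ((Nat.factorial (j+k) : ℕ) : ℝ)
      = (Nat.choose (j+k) j : ℝ) * (Nat.factorial j : ℝ) * (Nat.factorial k : ℝ) := by
    have h0 := Nat.add_choose_mul_factorial_mul_factorial j k
    have hsym : (j+k).choose k = (j+k).choose j := by
      rw [← Nat.choose_symm (show j ≤ j+k from by omega), show j+k-j = k from by omega]
    rw [← hsym]
    exact_mod_cast h0.symm
  rw [hfact]
  have hch : (Nat.choose (j+k) j : ℝ) ≠ 0 := by
    have : 0 < Nat.choose (j+k) j := Nat.choose_pos (by omega)
    positivity
  have hfj : ((Nat.factorial j : ℕ) : ℝ) ≠ 0 := by positivity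
  have hfk : ((Nat.factorial k : ℕ) : ℝ) ≠ 0 := by positivity
  field_simp
  push_cast
  ring

lemma dsumR (n : ℕ) (a b c d : ℝ) (hc : ∀ i ≤ n, poch c i ≠ 0) :
    (∑ i ∈ Finset.range (n+1),
      poch (-(n:ℝ)) i * poch (c-a) i * poch (c-b) i * poch (c-a-b+d+(i:ℝ)) (n-i) /
        ((Nat.factorial i : ℝ) * poch c i))
    = dsum n a b c d := by
  have expand : ∀ i ∈ Finset.range (n+1),
      poch (-(n:ℝ)) i * poch (c-a) i * poch (c-b) i * poch (c-a-b+d+(i:ℝ)) (n-i) /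
        ((Nat.factorial i : ℝ) * poch c i)
      = ∑ j ∈ Finset.range (n+1),
          poch (-(n:ℝ)) i * ((Nat.choose i j : ℝ) * poch a j * poch b j *
            poch (c+(j:ℝ)) (i-j) * poch (c-a-b) (i-j)) *
          poch (c-a-b+d+(i:ℝ)) (n-i) / ((Nat.factorial i : ℝ) * poch c i) := by
    intro i hi
    have hi2 : i ≤ n := Nat.lt_succ_iff.mp (Finset.mem_range.mp hi)
    have hs := saal i a b c
    rw [show poch (-(n:ℝ)) i * poch (c-a) i * poch (c-b) i * poch (c-a-b+d+(i:ℝ)) (n-i) /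
        ((Nat.factorial i : ℝ) * poch c i)
      = (poch (c-a) i * poch (c-b) i) * (poch (-(n:ℝ)) i * poch (c-a-b+d+(i:ℝ)) (n-i) /
        ((Nat.factorial i : ℝ) * poch c i)) from by ring]
    rw [← hs, Finset.sum_mul]
    rw [← Finset.sum_subset (Finset.range_subset_range.mpr (show i+1 ≤ n+1 from by omega))
      (by
        intro j hjn hji
        have : i < j := by
          simp only [Finset.mem_range] at hjn hji; omega
        rw [Nat.choose_eq_zero_of_lt this]
        push_cast
        ring)]
    apply Finset.sum_congr rfl
    intro j hj
    ring
  rw [Finset.sum_congr rfl expand, Finset.sum_comm]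
  unfold dsum
  apply Finset.sum_congr rfl
  intro j hj
  have hj2 : j ≤ n := Nat.lt_succ_iff.mp (Finset.mem_range.mp hj)
  rw [← Finset.sum_subset (show Finset.Ico j (n+1) ⊆ Finset.range (n+1) from by
        rw [Finset.range_eq_Ico]; exact Finset.Ico_subset_Ico (by omega) le_rfl)
      (by
        intro i hin hii
        simp only [Finset.mem_range] at hin
        simp only [Finset.mem_Ico] at hii
        have : i < j := by omega
        rw [Nat.choose_eq_zero_of_lt this]
        push_cast
        ring)]
  rw [Finset.sum_Ico_eq_sum_range]
  apply Finset.sum_congr rfl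
  intro k hk
  have hk2 : j + k ≤ n := by
    simp only [Finset.mem_range] at hk; omega
  have h1 : poch c j ≠ 0 := hc j hj2
  have h2 : poch (c + (j:ℝ)) k ≠ 0 := by
    intro h0
    apply hc (j+k) hk2
    rw [poch_add c j k, h0, mul_zero]
  exact term_eq n j k a b c d hk2 h1 h2

/-- Iterated Thomae transformation for terminating ₃F₂ series at argument 1. -/
theorem stmt3 (n : ℕ) (a b c d : ℝ)
    (hc : ∀ i ≤ n, poch c i ≠ 0) (hd : ∀ i ≤ n, poch d i ≠ 0)
    (he : ∀ i ≤ n, poch (c - a - b + d) i ≠ 0) :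
    ∑ i ∈ Finset.range (n + 1),
      poch (-(n : ℝ)) i * poch a i * poch b i /
        ((Nat.factorial i : ℝ) * poch c i * poch d i)
    = (poch (c + d - a - b) n / poch d n) *
      ∑ i ∈ Finset.range (n + 1),
        poch (-(n : ℝ)) i * poch (c - a) i * poch (c - b) i /
          ((Nat.factorial i : ℝ) * poch c i * poch (c - a - b + d) i) := by
  have hdn0 : poch d n ≠ 0 := hd n le_rfl
  have hen0 : poch (c-a-b+d) n ≠ 0 := he n le_rfl
  rw [show c + d - a - b = c - a - b + d from by ring]
  have L : (∑ i ∈ Finset.range (n + 1),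
      poch (-(n : ℝ)) i * poch a i * poch b i /
        ((Nat.factorial i : ℝ) * poch c i * poch d i))
      = (∑ i ∈ Finset.range (n+1),
          poch (-(n:ℝ)) i * poch a i * poch b i * poch (d+(i:ℝ)) (n-i) /
            ((Nat.factorial i : ℝ) * poch c i)) / poch d n := by
    rw [Finset.sum_div]
    apply Finset.sum_congr rfl
    intro i hi
    have hi2 : i ≤ n := Nat.lt_succ_iff.mp (Finset.mem_range.mp hi)
    have hsplit : poch d n = poch d i * poch (d+(i:ℝ)) (n-i) := by
      have h0 := poch_add d i (n-i)
      rw [show i + (n-i) = n from by omega] at h0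
      exact h0
    have hd1 : poch d i ≠ 0 := fun h0 => hdn0 (by rw [hsplit, h0, zero_mul])
    have hd2 : poch (d+(i:ℝ)) (n-i) ≠ 0 := fun h0 => hdn0 (by rw [hsplit, h0, mul_zero])
    have hc1 : poch c i ≠ 0 := hc i hi2
    have hf : ((Nat.factorial i : ℕ):ℝ) ≠ 0 := by positivity
    rw [hsplit]
    field_simp
  have R : (poch (c-a-b+d) n / poch d n) *
      ∑ i ∈ Finset.range (n + 1),
        poch (-(n : ℝ)) i * poch (c - a) i * poch (c - b) i /
          ((Nat.factorial i : ℝ) * poch c i * poch (c - a - b + d) i)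
      = (∑ i ∈ Finset.range (n+1),
          poch (-(n:ℝ)) i * poch (c-a) i * poch (c-b) i * poch (c-a-b+d+(i:ℝ)) (n-i) /
            ((Nat.factorial i : ℝ) * poch c i)) / poch d n := by
    rw [div_mul_eq_mul_div, Finset.mul_sum, Finset.sum_div, Finset.sum_div]
    apply Finset.sum_congr rfl
    intro i hi
    have hi2 : i ≤ n := Nat.lt_succ_iff.mp (Finset.mem_range.mp hi)
    have hsplit : poch (c-a-b+d) n = poch (c-a-b+d) i * poch (c-a-b+d+(i:ℝ)) (n-i) := by
      have h0 := poch_add (c-a-b+d) i (n-i)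
      rw [show i + (n-i) = n from by omega] at h0
      exact h0
    have he1 : poch (c-a-b+d) i ≠ 0 := fun h0 => hen0 (by rw [hsplit, h0, zero_mul])
    have he2 : poch (c-a-b+d+(i:ℝ)) (n-i) ≠ 0 := fun h0 => hen0 (by rw [hsplit, h0, mul_zero])
    have hc1 : poch c i ≠ 0 := hc i hi2
    have hf : ((Nat.factorial i : ℕ):ℝ) ≠ 0 := by positivity
    congr 1
    rw [hsplit]
    field_simp
  rw [L, R, (dsumL n a b c d).trans (dsumR n a b c d hc).symm]
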